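/- There is a universal constant C > 0 such that for every number of agents n, every profile u of unit-sum valuations, and every coarse correlated equilibrium q of Probabilistic Serial at u, SW_OPT(u) ≤ C·√n·E_{s∼q}[SW_PS(u,s)]; i.e., the coarse correlated Price of Anarchy of Probabilistic Serial is O(√n). -/

import Mathlib

/-- A unit-sum valuation over `n` items. -/
def UnitSum {n : ℕ} (v : Fin n → ℝ) : Prop :=
  (∀ j, 0 ≤ v j) ∧ ∑ j, v j = 1

/-- A unit-range valuation over `n` items. -/
def UnitRange {n : ℕ} (v : Fin n → ℝ) : Prop :=
  (∀ j, 0 ≤ v j ∧ v j ≤ 1) ∧ (∃ j, v j = 1) ∧ (∃ j, v j = 0)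

/-- The optimal social welfare: the maximum over matchings (permutations of the
items) of the total utility. -/
noncomputable def SWopt {n : ℕ} (u : Fin n → Fin n → ℝ) : ℝ :=
  Finset.univ.sup' ⟨Equiv.refl (Fin n), Finset.mem_univ _⟩
    (fun μ : Equiv.Perm (Fin n) => ∑ i, u i (μ i))
/-- The state of the Probabilistic Serial eating process: `rem j` is the remaining
amount of item `j`, `cons i j` the amount of item `j` eaten so far by agent `i`,
`time` the current time, and `fin j` the time at which item `j` was fully consumed. -/
structure PSState (n : ℕ) where
  rem : Fin n → ℝ
  cons : Fin n → Fin n → ℝ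
  time : ℝ
  fin : Fin n → ℝ

open Classical in
/-- One phase of the Probabilistic Serial eating process: while some item remains,
every agent eats at rate 1 from her most preferred remaining item (preference
orderings are given as bijections from ranks to items, rank `0` being the most
preferred); the phase lasts until the first moment a currently eaten item is
exhausted. -/
noncomputable def psStep {n : ℕ} (s : Fin n → (Fin n ≃ Fin n)) (st : PSState n) :
    PSState n :=
  let avail : Finset (Fin n) := Finset.univ.filter (fun j => 0 < st.rem j)
  if h : avail.Nonempty then
    -- the most preferred still-available item of each agent
    let top : Fin n → Fin n := fun i =>
      let R : Finset (Fin n) := Finset.univ.filter (fun r => s i r ∈ avail)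
      if hR : R.Nonempty then s i (R.min' hR) else h.choose
    -- the number of agents currently eating item `j`
    let rate : Fin n → ℕ := fun j => (Finset.univ.filter (fun i => top i = j)).card
    -- the duration of the phase: first time an eaten item is exhausted
    let Δ : ℝ := sInf {x : ℝ | ∃ j ∈ avail, 0 < rate j ∧ x = st.rem j / (rate j : ℝ)}
    { rem := fun j => st.rem j - (rate j : ℝ) * Δ
      cons := fun i j => st.cons i j + (if top i = j then Δ else 0)
      time := st.time + Δ
      fin := fun j =>
        if 0 < st.rem j ∧ st.rem j - (rate j : ℝ) * Δ ≤ 0 then st.time + Δ else st.fin j }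
  else st

/-- The final state of the Probabilistic Serial eating process (there are at most
`n` phases, since in each phase at least one item is exhausted). -/
noncomputable def psFinal {n : ℕ} (s : Fin n → (Fin n ≃ Fin n)) : PSState n :=
  (psStep s)^[n] ⟨fun _ => 1, fun _ _ => 0, 0, fun _ => 1⟩

/-- `psProb s i j` is the probability that agent `i` receives item `j` under
Probabilistic Serial at report profile `s`, i.e. the amount of item `j` eaten by
agent `i`. -/
noncomputable def psProb {n : ℕ} (s : Fin n → (Fin n ≃ Fin n)) (i j : Fin n) : ℝ :=
  (psFinal s).cons i j

/-- `psTime s j` is the time at which item `j` is fully consumed under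
Probabilistic Serial at report profile `s`. -/
noncomputable def psTime {n : ℕ} (s : Fin n → (Fin n ≃ Fin n)) (j : Fin n) : ℝ :=
  (psFinal s).fin j

/-- The expected social welfare of Probabilistic Serial at report profile `s`
under true valuation profile `u`. -/
noncomputable def psSW {n : ℕ} (u : Fin n → Fin n → ℝ) (s : Fin n → (Fin n ≃ Fin n)) : ℝ :=
  ∑ i, ∑ j, psProb s i j * u i j

/-- `s` is a pure Nash equilibrium of Probabilistic Serial at true valuation
profile `u`: no agent can strictly increase her expected utility by unilaterally
reporting a different ordering. -/
def PSNash {n : ℕ} (u : Fin n → Fin n → ℝ) (s : Fin n → (Fin n ≃ Fin n)) : Prop :=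
  ∀ (i : Fin n) (s' : Fin n ≃ Fin n),
    ∑ j, psProb (Function.update s i s') i j * u i j ≤ ∑ j, psProb s i j * u i j

/-- A coarse correlated equilibrium of Probabilistic Serial at true valuation
profile `u`: a distribution `q` over profiles of reported orderings such that no
agent can increase her expected utility by unilaterally committing to a fixed
ordering. -/
def PSCCE {n : ℕ} (u : Fin n → Fin n → ℝ) (q : (Fin n → (Fin n ≃ Fin n)) → ℝ) : Prop :=
  (∀ sp, 0 ≤ q sp) ∧ (∑ sp, q sp = 1) ∧
    ∀ (i : Fin n) (s' : Fin n ≃ Fin n),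
      ∑ sp, q sp * ∑ j, psProb (Function.update sp i s') i j * u i j ≤
        ∑ sp, q sp * ∑ j, psProb sp i j * u i j

namespace PS

open scoped Classical

variable {n : ℕ}

noncomputable def availSet (st : PSState n) : Finset (Fin n) := Finset.univ.filter (fun j => 0 < st.rem j)

noncomputable def ranks (s : Fin n → (Fin n ≃ Fin n)) (st : PSState n) (i : Fin n) :
    Finset (Fin n) := Finset.univ.filter (fun r => s i r ∈ availSet st)

lemma ranks_nonempty {s : Fin n → (Fin n ≃ Fin n)} {st : PSState n} (h : (availSet st).Nonempty)
    (i : Fin n) : (ranks s st i).Nonempty := by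
  obtain ⟨j, hj⟩ := h
  exact ⟨(s i).symm j, by simp [ranks, hj]⟩

open Classical in
noncomputable def topI (s : Fin n → (Fin n ≃ Fin n)) (st : PSState n) (i : Fin n) : Fin n :=
  if hR : (ranks s st i).Nonempty then s i ((ranks s st i).min' hR) else i

open Classical in
noncomputable def rateI (s : Fin n → (Fin n ≃ Fin n)) (st : PSState n) (j : Fin n) : ℕ :=
  (Finset.univ.filter (fun i => topI s st i = j)).card

noncomputable def deltaI (s : Fin n → (Fin n ≃ Fin n)) (st : PSState n) : ℝ :=
  sInf {x : ℝ | ∃ j ∈ availSet st, 0 < rateI s st j ∧ x = st.rem j / (rateI s st j : ℝ)}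

lemma psStep_eq (s : Fin n → (Fin n ≃ Fin n)) (st : PSState n) (h : (availSet st).Nonempty) :
    psStep s st =
      { rem := fun j => st.rem j - (rateI s st j : ℝ) * deltaI s st
        cons := fun i j => st.cons i j + (if topI s st i = j then deltaI s st else 0)
        time := st.time + deltaI s st
        fin := fun j =>
          if 0 < st.rem j ∧ st.rem j - (rateI s st j : ℝ) * deltaI s st ≤ 0 then
            st.time + deltaI s st else st.fin j } := by
  have h' : (Finset.univ.filter (fun j => 0 < st.rem j)).Nonempty := h
  rw [psStep, dif_pos h']
  have htop : ∀ i, (if hR : (Finset.univ.filter (fun r => s i r ∈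
        Finset.univ.filter (fun j => 0 < st.rem j))).Nonempty then
        s i (Finset.min' _ hR) else h'.choose) = topI s st i := by
    intro i
    have hr : (ranks s st i).Nonempty := ranks_nonempty h i
    rw [topI, dif_pos hr]
    rw [dif_pos (show (Finset.univ.filter (fun r => s i r ∈
        Finset.univ.filter (fun j => 0 < st.rem j))).Nonempty from hr)]
    rfl
  simp only [htop]
  rfl

lemma psStep_of_empty (s : Fin n → (Fin n ≃ Fin n)) (st : PSState n)
    (h : ¬ (availSet st).Nonempty) : psStep s st = st := by
  rw [psStep, dif_neg (show ¬ (Finset.univ.filter (fun j => 0 < st.rem j)).Nonempty from h)]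


section Step
variable {s : Fin n → (Fin n ≃ Fin n)} {st : PSState n}

lemma mem_availSet {j : Fin n} : j ∈ availSet st ↔ 0 < st.rem j := by
  simp [availSet]

lemma mem_ranks {i r : Fin n} : r ∈ ranks s st i ↔ 0 < st.rem (s i r) := by
  simp [ranks, mem_availSet]

lemma topI_eq_min (h : (availSet st).Nonempty) (i : Fin n) :
    topI s st i = s i ((ranks s st i).min' (ranks_nonempty h i)) := by
  rw [topI, dif_pos (ranks_nonempty h i)]

lemma topI_mem (h : (availSet st).Nonempty) (i : Fin n) : topI s st i ∈ availSet st := by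
  rw [topI_eq_min h i]
  have := (ranks s st i).min'_mem (ranks_nonempty h i)
  simpa [ranks] using this

/-- characterization of topI -/
lemma topI_eq_iff (h : (availSet st).Nonempty) (i j : Fin n) :
    topI s st i = j ↔ (0 < st.rem j ∧ ∀ r, r < (s i).symm j → ¬ 0 < st.rem (s i r)) := by
  constructor
  · intro ht
    subst ht
    refine ⟨mem_availSet.1 (topI_mem h i), ?_⟩
    intro r hr hpos
    rw [topI_eq_min h i] at hr
    simp only [Equiv.symm_apply_apply] at hr
    have hrk : r ∈ ranks s st i := mem_ranks.2 hpos
    exact absurd ((ranks s st i).min'_le r hrk) (not_le.2 hr)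
  · rintro ⟨hj, hmin⟩
    have hjr : (s i).symm j ∈ ranks s st i := mem_ranks.2 (by rwa [Equiv.apply_symm_apply])
    have hle : (ranks s st i).min' (ranks_nonempty h i) ≤ (s i).symm j :=
      Finset.min'_le _ _ hjr
    have hge : ¬ (ranks s st i).min' (ranks_nonempty h i) < (s i).symm j := by
      intro hlt
      have hm := mem_ranks.1 ((ranks s st i).min'_mem (ranks_nonempty h i))
      exact hmin _ hlt hm
    rw [topI_eq_min h i, le_antisymm hle (not_lt.1 hge), Equiv.apply_symm_apply]

lemma sum_rateI : ∑ j, (rateI s st j : ℝ) = (n : ℝ) := by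
  have h1 : (Finset.univ : Finset (Fin n)).card = ∑ j, rateI s st j :=
    Finset.card_eq_sum_card_fiberwise (fun i _ => Finset.mem_univ (topI s st i))
  rw [← Nat.cast_sum, ← h1, Finset.card_univ, Fintype.card_fin]

lemma rateI_pos_top (i : Fin n) : 0 < rateI s st (topI s st i) := by
  rw [rateI, Finset.card_pos]
  exact ⟨i, by simp⟩

lemma rateI_eq_zero (h : (availSet st).Nonempty) {j : Fin n} (hj : j ∉ availSet st) :
    rateI s st j = 0 := by
  rw [rateI, Finset.card_eq_zero]
  rw [Finset.filter_eq_empty_iff]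
  intro i _
  intro he
  exact hj (he ▸ topI_mem h i)

noncomputable def deltaSet (s : Fin n → (Fin n ≃ Fin n)) (st : PSState n) : Set ℝ :=
  {x : ℝ | ∃ j ∈ availSet st, 0 < rateI s st j ∧ x = st.rem j / (rateI s st j : ℝ)}

lemma deltaI_eq_sInf : deltaI s st = sInf (deltaSet s st) := rfl

lemma deltaSet_finite : (deltaSet s st).Finite := by
  have : deltaSet s st ⊆ (fun j => st.rem j / (rateI s st j : ℝ)) '' Set.univ := by
    rintro x ⟨j, _, _, rfl⟩
    exact ⟨j, Set.mem_univ _, rfl⟩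
  exact Set.Finite.subset (Set.finite_univ.image _) this

lemma deltaSet_nonempty (h : (availSet st).Nonempty) : (deltaSet s st).Nonempty := by
  exact ⟨_, topI s st h.choose, topI_mem h _, rateI_pos_top _, rfl⟩

lemma deltaI_mem (h : (availSet st).Nonempty) : deltaI s st ∈ deltaSet s st := by
  rw [deltaI_eq_sInf]
  exact Set.Nonempty.csInf_mem (deltaSet_nonempty h) deltaSet_finite

lemma deltaI_pos (h : (availSet st).Nonempty) : 0 < deltaI s st := by
  obtain ⟨j, hj, hr, he⟩ := deltaI_mem h
  rw [he]
  exact div_pos (mem_availSet.1 hj) (by exact_mod_cast hr)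

lemma deltaI_le (h : (availSet st).Nonempty) {j : Fin n} (hj : j ∈ availSet st)
    (hr : 0 < rateI s st j) : deltaI s st ≤ st.rem j / (rateI s st j : ℝ) :=
  csInf_le (Set.Finite.bddBelow deltaSet_finite) ⟨j, hj, hr, rfl⟩

lemma rate_mul_delta_le (h : (availSet st).Nonempty) (j : Fin n) (hrem : 0 ≤ st.rem j) :
    (rateI s st j : ℝ) * deltaI s st ≤ st.rem j := by
  rcases Nat.eq_zero_or_pos (rateI s st j) with hr | hr
  · simp [hr, hrem]
  by_cases hj : j ∈ availSet st
  · have := deltaI_le h hj hr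
    have hrp : (0:ℝ) < (rateI s st j : ℝ) := by exact_mod_cast hr
    calc (rateI s st j : ℝ) * deltaI s st ≤ (rateI s st j : ℝ) * (st.rem j / (rateI s st j : ℝ)) :=
          by exact mul_le_mul_of_nonneg_left this (le_of_lt hrp)
      _ = st.rem j := by field_simp
  · rw [rateI_eq_zero h hj] at hr
    exact absurd hr (lt_irrefl 0)

lemma exists_exhaust (h : (availSet st).Nonempty) :
    ∃ j ∈ availSet st, st.rem j - (rateI s st j : ℝ) * deltaI s st = 0 := by
  obtain ⟨j, hj, hr, he⟩ := deltaI_mem h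
  refine ⟨j, hj, ?_⟩
  rw [he]
  field_simp
  ring

end Step

section Iter

variable (s : Fin n → (Fin n ≃ Fin n))

noncomputable def stAt (k : ℕ) : PSState n :=
  (psStep s)^[k] ⟨fun _ => 1, fun _ _ => 0, 0, fun _ => 1⟩

lemma stAt_succ (k : ℕ) : stAt s (k+1) = psStep s (stAt s k) :=
  Function.iterate_succ_apply' _ _ _

structure Good (st : PSState n) : Prop where
  rem_nonneg : ∀ j, 0 ≤ st.rem j
  rem_le_one : ∀ j, st.rem j ≤ 1
  sum_rem : ∑ j, st.rem j = n - n * st.time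
  time_nonneg : 0 ≤ st.time
  cons_nonneg : ∀ i j, 0 ≤ st.cons i j
  sum_cons_row : ∀ i, ∑ j, st.cons i j = st.time
  sum_cons_col : ∀ j, ∑ i, st.cons i j = 1 - st.rem j
  fin_alive : ∀ j, 0 < st.rem j → st.fin j = 1
  fin_dead : ∀ j, st.rem j = 0 → 0 < st.fin j ∧ st.fin j ≤ st.time

variable {s}

lemma good_step {st : PSState n} (G : Good st) : Good (psStep s st) := by
  by_cases h : (availSet st).Nonempty
  · have hΔ := deltaI_pos (s := s) h
    rw [psStep_eq s st h]
    have hsum_ite : ∀ j, (∑ i, if topI s st i = j then deltaI s st else 0)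
        = (rateI s st j : ℝ) * deltaI s st := by
      intro j
      rw [Finset.sum_ite, Finset.sum_const, Finset.sum_const_zero, add_zero, rateI,
        nsmul_eq_mul]
    constructor
    · intro j
      have := rate_mul_delta_le (s := s) h j (G.rem_nonneg j)
      simp only
      linarith
    · intro j
      have h1 : 0 ≤ (rateI s st j : ℝ) * deltaI s st :=
        mul_nonneg (Nat.cast_nonneg _) (le_of_lt hΔ)
      have := G.rem_le_one j
      simp only
      linarith
    · simp only [Finset.sum_sub_distrib, G.sum_rem, ← Finset.sum_mul, sum_rateI]
      ring
    · simp only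
      linarith [G.time_nonneg]
    · intro i j
      have := G.cons_nonneg i j
      simp only
      positivity
    · intro i
      rw [Finset.sum_add_distrib, G.sum_cons_row, Finset.sum_ite_eq]
      simp
    · intro j
      simp only [Finset.sum_add_distrib, G.sum_cons_col, hsum_ite]
      ring
    · intro j hj
      simp only at hj ⊢
      have h1 : 0 ≤ (rateI s st j : ℝ) * deltaI s st :=
        mul_nonneg (Nat.cast_nonneg _) (le_of_lt hΔ)
      rw [if_neg (by push_neg; intro _; linarith)]
      exact G.fin_alive j (by linarith)
    · intro j hj
      simp only at hj ⊢
      rcases eq_or_lt_of_le (G.rem_nonneg j) with h0 | h0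
      · rw [if_neg (by push_neg; intro h'; exact absurd h'.le (not_le.2 (h0 ▸ h')))]
        obtain ⟨a, b⟩ := G.fin_dead j h0.symm
        exact ⟨a, by linarith⟩
      · rw [if_pos ⟨h0, le_of_eq hj⟩]
        constructor <;> linarith [G.time_nonneg]
  · rw [psStep_of_empty s st h]
    exact G

lemma good_stAt (k : ℕ) : Good (stAt s k) := by
  induction k with
  | zero =>
      refine ⟨?_, ?_, ?_, ?_, ?_, ?_, ?_, ?_, ?_⟩ <;>
        first
          | (intro j hj; simp [stAt] at hj ⊢)
          | (intro i j; simp [stAt])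
          | (intro j; simp [stAt])
          | simp [stAt]
  | succ k ih => rw [stAt_succ]; exact good_step ih

lemma time_mono_succ (k : ℕ) : (stAt s k).time ≤ (stAt s (k+1)).time := by
  rw [stAt_succ]
  by_cases h : (availSet (stAt s k)).Nonempty
  · rw [psStep_eq s _ h]; simp only; linarith [deltaI_pos (s := s) h]
  · rw [psStep_of_empty s _ h]

lemma time_mono {k l : ℕ} (hkl : k ≤ l) : (stAt s k).time ≤ (stAt s l).time := by
  induction l with
  | zero => simp_all
  | succ l ih =>
      rcases Nat.lt_or_ge k (l+1) with h | h
      · exact le_trans (ih (Nat.lt_succ_iff.1 h)) (time_mono_succ l)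
      · have : k = l + 1 := le_antisymm hkl h
        subst this; rfl

lemma rem_mono_succ (k : ℕ) (j : Fin n) : (stAt s (k+1)).rem j ≤ (stAt s k).rem j := by
  rw [stAt_succ]
  by_cases h : (availSet (stAt s k)).Nonempty
  · rw [psStep_eq s _ h]
    simp only
    have : 0 ≤ (rateI s (stAt s k) j : ℝ) * deltaI s (stAt s k) :=
      mul_nonneg (Nat.cast_nonneg _) (le_of_lt (deltaI_pos (s := s) h))
    linarith
  · rw [psStep_of_empty s _ h]

lemma rem_mono {k l : ℕ} (hkl : k ≤ l) (j : Fin n) : (stAt s l).rem j ≤ (stAt s k).rem j := by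
  induction l with
  | zero => simp_all
  | succ l ih =>
      rcases Nat.lt_or_ge k (l+1) with h | h
      · exact le_trans (rem_mono_succ l j) (ih (Nat.lt_succ_iff.1 h))
      · have : k = l + 1 := le_antisymm hkl h
        subst this; rfl

lemma card_avail (k : ℕ) : (availSet (stAt s k)).card ≤ n - k := by
  induction k with
  | zero =>
      have : (availSet (stAt s 0)).card ≤ (Finset.univ : Finset (Fin n)).card :=
        Finset.card_le_card (Finset.subset_univ _)
      simpa using this
  | succ k ih =>
      by_cases h : (availSet (stAt s k)).Nonempty
      · have hss : availSet (stAt s (k+1)) ⊂ availSet (stAt s k) := by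
          constructor
          · intro j hj
            rw [mem_availSet] at hj ⊢
            exact lt_of_lt_of_le hj (rem_mono_succ k j)
          · intro hsub
            obtain ⟨j, hj, hz⟩ := exists_exhaust (s := s) h
            have hj1 : j ∈ availSet (stAt s (k+1)) := by
              apply hsub
              exact hj
            rw [mem_availSet] at hj1
            rw [stAt_succ, psStep_eq s _ h] at hj1
            simp only at hj1
            linarith
        have := Finset.card_lt_card hss
        omega
      · rw [Finset.not_nonempty_iff_eq_empty] at h
        rw [stAt_succ, psStep_of_empty s _ (by rw [h]; simp), h]
        simp

lemma rem_final (j : Fin n) : (stAt s n).rem j = 0 := by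
  have hc := card_avail (s := s) n
  simp only [Nat.sub_self, Nat.le_zero, Finset.card_eq_zero] at hc
  have : j ∉ availSet (stAt s n) := by rw [hc]; exact Finset.notMem_empty j
  rw [mem_availSet] at this
  have := (good_stAt (s := s) n).rem_nonneg j
  push_neg at *
  linarith

lemma time_final (hn : 0 < n) : (stAt s n).time = 1 := by
  have hs := (good_stAt (s := s) n).sum_rem
  have : ∑ j, (stAt s n).rem j = 0 := by
    apply Finset.sum_eq_zero
    intro j _
    exact rem_final j
  rw [this] at hs
  have hn' : (0:ℝ) < n := by exact_mod_cast hn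
  have h2 : (n:ℝ) * (stAt s n).time = (n:ℝ) * 1 := by linarith
  exact mul_left_cancel₀ (ne_of_gt hn') h2

lemma psFinal_eq : psFinal s = stAt s n := rfl

lemma fin_stable_succ (k : ℕ) (j : Fin n) (hj : (stAt s k).rem j = 0) :
    (stAt s (k+1)).fin j = (stAt s k).fin j ∧ (stAt s (k+1)).rem j = 0 := by
  rw [stAt_succ]
  by_cases h : (availSet (stAt s k)).Nonempty
  · have hr0 : rateI s (stAt s k) j = 0 :=
      rateI_eq_zero h (by rw [mem_availSet, hj]; exact lt_irrefl 0)
    rw [psStep_eq s _ h]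
    simp [hr0, hj]
  · rw [psStep_of_empty s _ h]
    exact ⟨rfl, hj⟩

lemma fin_stable {k l : ℕ} (hkl : k ≤ l) (j : Fin n) (hj : (stAt s k).rem j = 0) :
    (stAt s l).fin j = (stAt s k).fin j ∧ (stAt s l).rem j = 0 := by
  induction l with
  | zero => simp_all
  | succ l ih =>
      rcases Nat.lt_or_ge k (l+1) with h | h
      · obtain ⟨h1, h2⟩ := ih (Nat.lt_succ_iff.1 h)
        obtain ⟨h3, h4⟩ := fin_stable_succ l j h2
        exact ⟨h3.trans h1, h4⟩
      · have : k = l + 1 := le_antisymm hkl h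
        subst this; exact ⟨rfl, hj⟩

lemma fin_eq_final {k : ℕ} (j : Fin n) (hj : (stAt s k).rem j = 0) :
    psTime s j = (stAt s k).fin j := by
  rcases le_total k n with h | h
  · exact (fin_stable h j hj).1
  · exact ((fin_stable h j (rem_final j)).1).symm

lemma dead_le (k : ℕ) (j : Fin n) (hj : (stAt s k).rem j = 0) :
    psTime s j ≤ (stAt s k).time := by
  rw [fin_eq_final j hj]
  exact ((good_stAt k).fin_dead j hj).2

lemma alive_lt : ∀ (m k : ℕ), n ≤ k + m → ∀ j : Fin n, 0 < (stAt s k).rem j →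
    (stAt s k).time < psTime s j := by
  intro m
  induction m with
  | zero =>
      intro k hk j hj
      have := rem_mono (s := s) (by omega : n ≤ k) j
      have := rem_final (s := s) j
      linarith
  | succ m ih =>
      intro k hk j hj
      have h : (availSet (stAt s k)).Nonempty := ⟨j, mem_availSet.2 hj⟩
      by_cases h0 : (stAt s (k+1)).rem j = 0
      · have hΔ := deltaI_pos (s := s) h
        have hfin : (stAt s (k+1)).fin j = (stAt s k).time + deltaI s (stAt s k) := by
          rw [stAt_succ, psStep_eq s _ h]
          simp only
          rw [if_pos]
          refine ⟨hj, ?_⟩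
          have : (stAt s (k+1)).rem j = (stAt s k).rem j - (rateI s (stAt s k) j : ℝ) *
              deltaI s (stAt s k) := by rw [stAt_succ, psStep_eq s _ h]
          rw [this] at h0
          linarith
        rw [fin_eq_final j h0, hfin]
        linarith
      · have hj1 : 0 < (stAt s (k+1)).rem j :=
          lt_of_le_of_ne ((good_stAt (k+1)).rem_nonneg j) (Ne.symm h0)
        have := ih (k+1) (by omega) j hj1
        have := time_mono_succ (s := s) k
        linarith

lemma dead_iff (k : ℕ) (j : Fin n) :
    (stAt s k).rem j = 0 ↔ psTime s j ≤ (stAt s k).time := by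
  constructor
  · exact dead_le k j
  · intro h
    by_contra h0
    have hj : 0 < (stAt s k).rem j :=
      lt_of_le_of_ne ((good_stAt k).rem_nonneg j) (Ne.symm h0)
    have := alive_lt n k (by omega) j hj
    linarith

lemma alive_iff (k : ℕ) (j : Fin n) :
    0 < (stAt s k).rem j ↔ (stAt s k).time < psTime s j := by
  rcases eq_or_lt_of_le ((good_stAt (s := s) k).rem_nonneg j) with h | h
  · simp only [← h]
    constructor
    · intro h'; exact absurd h'.le (not_le.2 h')
    · intro h'
      exact absurd (dead_le k j h.symm) (not_le.2 h')
  · constructor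
    · intro _
      by_contra h'
      push_neg at h'
      rw [← dead_iff] at h'
      linarith
    · intro _; exact h

lemma psTime_breakpoint_aux : ∀ (k : ℕ) (j : Fin n), (stAt s k).rem j = 0 →
    ∃ k' ≤ k, psTime s j = (stAt s k').time := by
  intro k
  induction k with
  | zero =>
      intro j hj
      simp [stAt] at hj
  | succ k ih =>
      intro j hj
      by_cases h0 : (stAt s k).rem j = 0
      · obtain ⟨k', hk', he⟩ := ih j h0
        exact ⟨k', by omega, he⟩
      · have hjp : 0 < (stAt s k).rem j :=
          lt_of_le_of_ne ((good_stAt k).rem_nonneg j) (Ne.symm h0)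
        have h : (availSet (stAt s k)).Nonempty := ⟨j, mem_availSet.2 hjp⟩
        refine ⟨k+1, le_refl _, ?_⟩
        rw [fin_eq_final j hj]
        rw [stAt_succ, psStep_eq s _ h]
        simp only
        rw [if_pos]
        refine ⟨hjp, ?_⟩
        have : (stAt s (k+1)).rem j = (stAt s k).rem j - (rateI s (stAt s k) j : ℝ) *
            deltaI s (stAt s k) := by rw [stAt_succ, psStep_eq s _ h]
        rw [this] at hj
        linarith

lemma psTime_breakpoint (j : Fin n) : ∃ k ≤ n, psTime s j = (stAt s k).time :=
  psTime_breakpoint_aux n j (rem_final j)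

lemma psTime_pos (j : Fin n) : 0 < psTime s j := by
  rw [fin_eq_final j (rem_final j)]
  exact ((good_stAt n).fin_dead j (rem_final j)).1

lemma psTime_le_one (j : Fin n) : psTime s j ≤ 1 := by
  rw [fin_eq_final j (rem_final j)]
  have := ((good_stAt (s := s) n).fin_dead j (rem_final j)).2
  rw [time_final (s := s) j.pos] at this
  exact this

lemma psTime_eq_succ_time {k : ℕ} {j : Fin n} (h0 : 0 < (stAt s k).rem j)
    (h1 : (stAt s (k+1)).rem j = 0) : psTime s j = (stAt s (k+1)).time := by
  have h : (availSet (stAt s k)).Nonempty := ⟨j, mem_availSet.2 h0⟩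
  rw [fin_eq_final j h1]
  rw [stAt_succ, psStep_eq s _ h]
  simp only
  rw [if_pos]
  refine ⟨h0, ?_⟩
  have heq : (stAt s (k+1)).rem j = (stAt s k).rem j - (rateI s (stAt s k) j : ℝ) *
      deltaI s (stAt s k) := by rw [stAt_succ, psStep_eq s _ h]
  rw [heq] at h1
  linarith

/-- the eating condition: agent `i` eats item `j` during phase `k` iff `j` is alive
and all items `i` prefers to `j` are dead. -/
def condEat (s : Fin n → (Fin n ≃ Fin n)) (k : ℕ) (i j : Fin n) : Prop :=
  (stAt s k).time < psTime s j ∧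
    ∀ r, r < (s i).symm j → psTime s (s i r) ≤ (stAt s k).time

lemma cons_succ (k : ℕ) (i j : Fin n) :
    (stAt s (k+1)).cons i j = (stAt s k).cons i j +
      (if condEat s k i j then ((stAt s (k+1)).time - (stAt s k).time) else 0) := by
  by_cases h : (availSet (stAt s k)).Nonempty
  · have htop : topI s (stAt s k) i = j ↔ condEat s k i j := by
      rw [topI_eq_iff h, condEat]
      constructor
      · rintro ⟨h1, h2⟩
        refine ⟨(alive_iff k j).1 h1, fun r hr => ?_⟩
        have := h2 r hr
        have h3 : (stAt s k).rem (s i r) = 0 :=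
          le_antisymm (not_lt.1 this) ((good_stAt k).rem_nonneg _)
        exact dead_le k _ h3
      · rintro ⟨h1, h2⟩
        refine ⟨(alive_iff k j).2 h1, fun r hr => ?_⟩
        rw [alive_iff]
        exact not_lt.2 (h2 r hr)
    rw [stAt_succ, psStep_eq s _ h]
    simp only
    congr 1
    exact if_congr htop (by ring) rfl
  · rw [stAt_succ, psStep_of_empty s _ h]
    simp

lemma cons_eq_sum (N : ℕ) (i j : Fin n) :
    (stAt s N).cons i j = ∑ k ∈ Finset.range N,
      (if condEat s k i j then ((stAt s (k+1)).time - (stAt s k).time) else 0) := by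
  induction N with
  | zero => simp [stAt]
  | succ N ih => rw [Finset.sum_range_succ, ← ih, cons_succ]

lemma sum_ite_time (b : ℝ) (hb0 : 0 ≤ b)
    (hb : ∀ k, (stAt s k).time < b → (stAt s (k+1)).time ≤ b) (N : ℕ) :
    (∑ k ∈ Finset.range N, if (stAt s k).time < b then
      (stAt s (k+1)).time - (stAt s k).time else 0) = min b (stAt s N).time := by
  induction N with
  | zero =>
      simp only [Finset.range_zero, Finset.sum_empty]
      have h0 : (stAt s 0).time = 0 := rfl
      rw [h0, min_eq_right hb0]
  | succ N ih =>
      rw [Finset.sum_range_succ, ih]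
      by_cases h : (stAt s N).time < b
      · rw [if_pos h, min_eq_right h.le, min_eq_right (hb N h)]
        ring
      · push_neg at h
        rw [if_neg (not_lt.2 h), min_eq_left h,
          min_eq_left (h.trans (time_mono_succ N)), add_zero]

lemma breakpoint_hb (m : ℕ) :
    ∀ k, (stAt s k).time < (stAt s m).time → (stAt s (k+1)).time ≤ (stAt s m).time := by
  intro k hk
  have hkm : k < m := by
    by_contra h
    push_neg at h
    exact absurd (time_mono (s := s) h) (not_le.2 hk)
  exact time_mono (s := s) hkm

lemma sum_delta_to_breakpoint {m : ℕ} (hm : m ≤ n) :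
    (∑ k ∈ Finset.range n, if (stAt s k).time < (stAt s m).time then
      (stAt s (k+1)).time - (stAt s k).time else 0) = (stAt s m).time := by
  rw [sum_ite_time _ ((good_stAt m).time_nonneg) (breakpoint_hb m) n]
  exact min_eq_left (time_mono hm)

/-- if agent `i` ranks item `j` first, she gets exactly `psTime s j` of it. -/
lemma psProb_top {i j : Fin n} (hn : 0 < n) (hi : s i ⟨0, hn⟩ = j) :
    psProb s i j = psTime s j := by
  have hsymm : (s i).symm j = ⟨0, hn⟩ := by rw [← hi, Equiv.symm_apply_apply]
  have hcond : ∀ k, condEat s k i j ↔ (stAt s k).time < psTime s j := by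
    intro k
    rw [condEat, hsymm]
    exact and_iff_left (fun r hr => absurd hr (by simp [Fin.lt_def]))
  have : psProb s i j = (stAt s n).cons i j := rfl
  rw [this, cons_eq_sum]
  obtain ⟨m, hm, he⟩ := psTime_breakpoint (s := s) j
  calc (∑ k ∈ Finset.range n, if condEat s k i j then
        (stAt s (k+1)).time - (stAt s k).time else 0)
      = ∑ k ∈ Finset.range n, if (stAt s k).time < (stAt s m).time then
        (stAt s (k+1)).time - (stAt s k).time else 0 := by
        apply Finset.sum_congr rfl
        intro k _
        exact if_congr (by rw [hcond k, he]) rfl rfl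
    _ = (stAt s m).time := sum_delta_to_breakpoint hm
    _ = psTime s j := he.symm

/-- the number of items exhausted by time `t` is at most `n*t`. -/
lemma count_exhausted (t : ℝ) (ht : 0 ≤ t) :
    ((Finset.univ.filter (fun j => psTime s j ≤ t)).card : ℝ) ≤ n * t := by
  have hne : (Finset.univ.filter (fun k : Fin (n+1) => (stAt s (k : ℕ)).time ≤ t)).Nonempty := by
    refine ⟨⟨0, Nat.succ_pos n⟩, ?_⟩
    simp only [Finset.mem_filter, Finset.mem_univ, true_and]
    have h00 : (stAt s 0).time = 0 := rfl
    rw [h00]; exact ht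
  obtain ⟨m, hmem, hmax⟩ := Finset.exists_max_image _ (fun k : Fin (n+1) => k) hne
  rw [Finset.mem_filter] at hmem
  have hmt : (stAt s (m : ℕ)).time ≤ t := hmem.2
  have hdead : ∀ j, psTime s j ≤ t → (stAt s (m : ℕ)).rem j = 0 := by
    intro j hj
    obtain ⟨k, hk, he⟩ := psTime_breakpoint (s := s) j
    have hkK : (⟨k, by omega⟩ : Fin (n+1)) ∈
        Finset.univ.filter (fun k : Fin (n+1) => (stAt s (k : ℕ)).time ≤ t) := by
      rw [Finset.mem_filter]
      exact ⟨Finset.mem_univ _, by rw [← he]; exact hj⟩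
    have hkm : ((⟨k, by omega⟩ : Fin (n+1)) : Fin (n+1)) ≤ m := hmax _ hkK
    rw [dead_iff, he]
    exact time_mono (s := s) hkm
  have hcard : ((Finset.univ.filter (fun j => psTime s j ≤ t)).card : ℝ) ≤
      ∑ j, (1 - (stAt s (m : ℕ)).rem j) := by
    calc ((Finset.univ.filter (fun j => psTime s j ≤ t)).card : ℝ)
        = ∑ j ∈ Finset.univ.filter (fun j => psTime s j ≤ t), (1:ℝ) := by simp
      _ ≤ ∑ j ∈ Finset.univ.filter (fun j => psTime s j ≤ t),
            (1 - (stAt s (m : ℕ)).rem j) := by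
          apply Finset.sum_le_sum
          intro j hj
          rw [Finset.mem_filter] at hj
          rw [hdead j hj.2]
          norm_num
      _ ≤ ∑ j, (1 - (stAt s (m : ℕ)).rem j) := by
          apply Finset.sum_le_sum_of_subset_of_nonneg (Finset.filter_subset _ _)
          intro j _ _
          linarith [(good_stAt (s := s) (m : ℕ)).rem_le_one j]
  have hsum : ∑ j, (1 - (stAt s (m : ℕ)).rem j) = n * (stAt s (m : ℕ)).time := by
    rw [Finset.sum_sub_distrib, (good_stAt (s := s) (m : ℕ)).sum_rem, Finset.sum_const,
      Finset.card_univ, Fintype.card_fin, nsmul_eq_mul, mul_one]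
    ring
  calc ((Finset.univ.filter (fun j => psTime s j ≤ t)).card : ℝ)
      ≤ ∑ j, (1 - (stAt s (m : ℕ)).rem j) := hcard
    _ = n * (stAt s (m : ℕ)).time := hsum
    _ ≤ n * t := mul_le_mul_of_nonneg_left hmt (Nat.cast_nonneg n)

/-- sum of phase lengths before the exhaustion of `j` equals its exhaustion time -/
lemma sum_delta_lt_psTime (j : Fin n) :
    (∑ k ∈ Finset.range n, if (stAt s k).time < psTime s j then
      (stAt s (k+1)).time - (stAt s k).time else 0) = psTime s j := by
  obtain ⟨m, hm, he⟩ := psTime_breakpoint (s := s) j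
  rw [he]
  exact sum_delta_to_breakpoint hm

end Iter

section Helpers

/-- length of the overlap of the intervals `[a,b)` and `[c,d)` -/
noncomputable def ov (a b c d : ℝ) : ℝ := max 0 (min b d - max a c)

lemma ov_nonneg (a b c d : ℝ) : 0 ≤ ov a b c d := le_max_left _ _

lemma ov_comm (a b c d : ℝ) : ov a b c d = ov c d a b := by
  simp only [ov, min_comm b d, max_comm a c]

lemma ov_eq_clamp {a b c d : ℝ} (hab : a ≤ b) (hcd : c ≤ d) :
    ov a b c d = min d (max c b) - min d (max c a) := by
  simp only [ov, min_def, max_def]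
  split_ifs <;> linarith

lemma ov_pos {a b c d : ℝ} (h : 0 < ov a b c d) : max a c < min b d := by
  by_contra h'
  push_neg at h'
  rw [ov, max_eq_left (by linarith)] at h
  exact absurd h (lt_irrefl 0)

lemma ov_telescope {c : ℕ → ℝ} (hmono : ∀ k, c k ≤ c (k+1)) (A B : ℝ) (hAB : A ≤ B) (N : ℕ) :
    (∑ k ∈ Finset.range N, ov (c k) (c (k+1)) A B)
      = min B (max A (c N)) - min B (max A (c 0)) := by
  induction N with
  | zero => simp
  | succ N ih =>
      rw [Finset.sum_range_succ, ih, ov_eq_clamp (hmono N) hAB]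
      ring

/-- Abel-summation bound: if the partial sums of `c` dominate those of the uniform
distribution and `w` is antitone and nonnegative, then `∑ w c ≥ (∑ w)/N`. -/
lemma abel_bound (N : ℕ) (w c : ℕ → ℝ)
    (hw0 : ∀ k, k < N → 0 ≤ w k)
    (hwa : ∀ k, k + 1 < N → w (k+1) ≤ w k)
    (hA : ∀ k, k < N → ((k:ℝ)+1)/N ≤ ∑ l ∈ Finset.range (k+1), c l) :
    (∑ k ∈ Finset.range N, w k) / N ≤ ∑ k ∈ Finset.range N, w k * c k := by
  rcases Nat.eq_zero_or_pos N with rfl | hN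
  · simp
  have hNr : (0:ℝ) < N := by exact_mod_cast hN
  have hbp1 := Finset.sum_range_by_parts (fun k => w k) (fun k => c k) N
  have hbp2 := Finset.sum_range_by_parts (fun k => w k) (fun _ => (1:ℝ)/N) N
  simp only [smul_eq_mul] at hbp1 hbp2
  have h2 : ∑ k ∈ Finset.range N, w k * (1/N) = (∑ k ∈ Finset.range N, w k) / N := by
    rw [Finset.sum_div]
    exact Finset.sum_congr rfl (fun k _ => by ring)
  rw [← h2, hbp2, hbp1]
  have hS : (1:ℝ) ≤ ∑ l ∈ Finset.range N, c l := by
    have hh := hA (N-1) (by omega)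
    have hN1 : N - 1 + 1 = N := by omega
    rw [hN1] at hh
    have hcast : ((N-1:ℕ):ℝ) + 1 = (N:ℝ) := by
      push_cast [Nat.cast_sub (by omega : 1 ≤ N)]
      ring
    rw [hcast, div_self (ne_of_gt hNr)] at hh
    exact hh
  have key1 : w (N-1) * (∑ l ∈ Finset.range N, (1:ℝ)/N) ≤
      w (N-1) * ∑ l ∈ Finset.range N, c l := by
    apply mul_le_mul_of_nonneg_left _ (hw0 _ (by omega))
    rw [Finset.sum_const, Finset.card_range, nsmul_eq_mul]
    rw [show (N:ℝ) * (1/N) = 1 from by field_simp]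
    exact hS
  have key2 : ∑ l ∈ Finset.range (N-1), (w (l+1) - w l) * ∑ m ∈ Finset.range (l+1), c m ≤
      ∑ l ∈ Finset.range (N-1), (w (l+1) - w l) * ∑ m ∈ Finset.range (l+1), (1:ℝ)/N := by
    apply Finset.sum_le_sum
    intro l hl
    rw [Finset.mem_range] at hl
    have hwl : w (l+1) - w l ≤ 0 := by
      have := hwa l (by omega)
      linarith
    have hAl := hA l (by omega)
    rw [Finset.sum_const, Finset.card_range, nsmul_eq_mul]
    have hAr : ((l+1:ℕ):ℝ) * (1/N) = ((l:ℝ)+1)/N := by push_cast; ring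
    rw [hAr]
    exact mul_le_mul_of_nonpos_left hAl hwl
  linarith

end Helpers

section PropShare
variable {s : Fin n → (Fin n ≃ Fin n)}

lemma sum_fin_eq_range (g : Fin n → ℝ) :
    ∑ r : Fin n, g r = ∑ v ∈ Finset.range n, (if h : v < n then g ⟨v, h⟩ else 0) := by
  rw [← Fin.sum_univ_eq_sum_range (fun v => if h : v < n then g ⟨v, h⟩ else 0) n]
  exact Finset.sum_congr rfl (fun r _ => by rw [dif_pos r.isLt])

lemma psProb_nonneg (i j : Fin n) : 0 ≤ psProb s i j :=
  (good_stAt (s := s) n).cons_nonneg i j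

lemma sum_psProb (i : Fin n) : ∑ j, psProb s i j = 1 := by
  have h := (good_stAt (s := s) n).sum_cons_row i
  rw [time_final (s := s) i.pos] at h
  exact h

lemma delta_nonneg (k : ℕ) : 0 ≤ (stAt s (k+1)).time - (stAt s k).time :=
  sub_nonneg.2 (time_mono_succ k)

/-- partial-sum domination: the total consumption by agent `i` of her (reported)
top `k+1` items is at least `(k+1)/n`. -/
lemma partial_share (i : Fin n) (k : ℕ) (hk : k < n) :
    ((k:ℝ)+1)/n ≤ ∑ r ∈ Finset.univ.filter (fun r : Fin n => r.val ≤ k),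
      psProb s i (s i r) := by
  set Rset := Finset.univ.filter (fun r : Fin n => r.val ≤ k) with hRset
  have hne : Rset.Nonempty := ⟨⟨k, hk⟩, by simp [hRset]⟩
  obtain ⟨rh, hrhmem, hrh⟩ := Finset.exists_max_image Rset (fun r => psTime s (s i r)) hne
  -- the consumption within the top k+1 ranks is at least b := psTime s (s i rh)
  have hstep : psTime s (s i rh) ≤ ∑ r ∈ Rset, psProb s i (s i r) := by
    have hexp : ∑ r ∈ Rset, psProb s i (s i r) = ∑ ph ∈ Finset.range n,
        ∑ r ∈ Rset, (if condEat s ph i (s i r) then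
          (stAt s (ph+1)).time - (stAt s ph).time else 0) := by
      rw [Finset.sum_comm]
      apply Finset.sum_congr rfl
      intro r _
      exact cons_eq_sum n i (s i r)
    rw [hexp]
    have hlow : ∀ ph ∈ Finset.range n,
        (if (stAt s ph).time < psTime s (s i rh) then
          (stAt s (ph+1)).time - (stAt s ph).time else 0) ≤
        ∑ r ∈ Rset, (if condEat s ph i (s i r) then
          (stAt s (ph+1)).time - (stAt s ph).time else 0) := by
      intro ph _
      by_cases hlt : (stAt s ph).time < psTime s (s i rh)
      · rw [if_pos hlt]
        have hFne : (Rset.filter (fun r => (stAt s ph).time < psTime s (s i r))).Nonempty :=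
          ⟨rh, by rw [Finset.mem_filter]; exact ⟨hrhmem, hlt⟩⟩
        set r0 := (Rset.filter (fun r => (stAt s ph).time < psTime s (s i r))).min' hFne
          with hr0
        have hr0mem : r0 ∈ Rset.filter (fun r => (stAt s ph).time < psTime s (s i r)) :=
          Finset.min'_mem _ _
        rw [Finset.mem_filter] at hr0mem
        have hcond : condEat s ph i (s i r0) := by
          refine ⟨hr0mem.2, ?_⟩
          intro r' hr'
          rw [Equiv.symm_apply_apply] at hr'
          have hr'R : r' ∈ Rset := by
            rw [hRset, Finset.mem_filter]
            refine ⟨Finset.mem_univ _, ?_⟩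
            have h1 : r'.val < r0.val := hr'
            have h2 : r0.val ≤ k := by
              have := hr0mem.1
              rw [hRset, Finset.mem_filter] at this
              exact this.2
            omega
          by_contra hcon
          push_neg at hcon
          have : r' ∈ Rset.filter (fun r => (stAt s ph).time < psTime s (s i r)) := by
            rw [Finset.mem_filter]; exact ⟨hr'R, hcon⟩
          exact absurd (Finset.min'_le _ _ this) (not_le.2 hr')
        have hsingle := Finset.single_le_sum
          (f := fun r => if condEat s ph i (s i r) then
            (stAt s (ph+1)).time - (stAt s ph).time else 0)
          (fun r _ => by by_cases hc : condEat s ph i (s i r) <;>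
            simp [hc, delta_nonneg (s := s) ph])
          hr0mem.1
        simpa only [if_pos hcond] using hsingle
      · rw [if_neg hlt]
        apply Finset.sum_nonneg
        intro r _
        by_cases hc : condEat s ph i (s i r) <;> simp [hc, delta_nonneg (s := s) ph]
    calc psTime s (s i rh)
        = ∑ ph ∈ Finset.range n, (if (stAt s ph).time < psTime s (s i rh) then
            (stAt s (ph+1)).time - (stAt s ph).time else 0) := (sum_delta_lt_psTime _).symm
      _ ≤ _ := Finset.sum_le_sum hlow
  -- (k+1)/n ≤ psTime s (s i rh)
  have hcount : ((k:ℝ)+1)/n ≤ psTime s (s i rh) := by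
    have hRcard : Rset.card = k + 1 := by
      rw [hRset, Finset.card_filter]
      rw [Fin.sum_univ_eq_sum_range (fun v => if v ≤ k then 1 else 0) n]
      rw [Finset.sum_ite, Finset.sum_const, Finset.sum_const_zero, add_zero, smul_eq_mul,
        mul_one]
      rw [show Finset.filter (fun v => v ≤ k) (Finset.range n) = Finset.range (k+1) from by
        ext v; simp [Finset.mem_range]; omega]
      exact Finset.card_range (k+1)
    have himg : Finset.image (fun r => s i r) Rset ⊆
        Finset.univ.filter (fun j => psTime s j ≤ psTime s (s i rh)) := by
      intro j hj
      rw [Finset.mem_image] at hj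
      obtain ⟨r, hr, rfl⟩ := hj
      rw [Finset.mem_filter]
      exact ⟨Finset.mem_univ _, hrh r hr⟩
    have hb0 : 0 ≤ psTime s (s i rh) := (psTime_pos (s := s) (s i rh)).le
    have h1 : ((k:ℝ)+1) ≤ n * psTime s (s i rh) := by
      calc ((k:ℝ)+1) = ((Rset.card : ℕ) : ℝ) := by rw [hRcard]; push_cast; ring
        _ = ((Finset.image (fun r => s i r) Rset).card : ℝ) := by
            rw [Finset.card_image_of_injective _ (s i).injective]
        _ ≤ ((Finset.univ.filter (fun j => psTime s j ≤ psTime s (s i rh))).card : ℝ) := by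
            exact_mod_cast Nat.cast_le.2 (Finset.card_le_card himg)
        _ ≤ n * psTime s (s i rh) := count_exhausted _ hb0
    have hn' : (0:ℝ) < n := by
      have := i.pos; exact_mod_cast this
    rw [div_le_iff₀ hn']
    linarith
  linarith

/-- sd-proportionality: an agent whose report sorts her values in decreasing order
receives at least her proportional share of value. -/
lemma prop_share (i : Fin n) (w : Fin n → ℝ) (hw0 : ∀ j, 0 ≤ w j)
    (hwa : ∀ r r' : Fin n, r ≤ r' → w (s i r') ≤ w (s i r)) :
    (∑ j, w j) / n ≤ ∑ j, psProb s i j * w j := by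
  classical
  have hA : ∀ k, k < n → ((k:ℝ)+1)/n ≤ ∑ l ∈ Finset.range (k+1),
      (fun v => if h : v < n then psProb s i (s i ⟨v,h⟩) else 0) l := by
    intro k hk
    have hconv : ∑ l ∈ Finset.range (k+1),
        (fun v => if h : v < n then psProb s i (s i ⟨v,h⟩) else 0) l =
        ∑ r ∈ Finset.univ.filter (fun r : Fin n => r.val ≤ k), psProb s i (s i r) := by
      rw [Finset.sum_filter, sum_fin_eq_range
        (fun r => if r.val ≤ k then psProb s i (s i r) else 0)]
      rw [show Finset.range (k+1) =
        Finset.filter (fun v => v ≤ k) (Finset.range n) from by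
          ext v; simp [Finset.mem_range]; omega]
      rw [Finset.sum_filter]
      apply Finset.sum_congr rfl
      intro v hv
      rw [Finset.mem_range] at hv
      by_cases hvk : v ≤ k <;> simp [hvk, dif_pos hv]
    rw [hconv]
    exact partial_share i k hk
  have habel := abel_bound n
    (fun v => if h : v < n then w (s i ⟨v,h⟩) else 0)
    (fun v => if h : v < n then psProb s i (s i ⟨v,h⟩) else 0)
    (fun k hk => by simp only [dif_pos hk]; exact hw0 _)
    (fun k hk => by
      simp only [dif_pos (show k + 1 < n from hk), dif_pos (show k < n by omega)]
      exact hwa ⟨k, by omega⟩ ⟨k+1, by omega⟩ (by simp [Fin.le_def]))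
    hA
  have hc1 : ∑ k ∈ Finset.range n, (fun v => if h : v < n then w (s i ⟨v,h⟩) else 0) k
      = ∑ j, w j := by
    rw [← Equiv.sum_comp (s i) w, sum_fin_eq_range (fun r => w (s i r))]
  have hc2 : ∑ k ∈ Finset.range n,
      ((fun v => if h : v < n then w (s i ⟨v,h⟩) else 0) k *
        (fun v => if h : v < n then psProb s i (s i ⟨v,h⟩) else 0) k)
      = ∑ j, psProb s i j * w j := by
    rw [← Equiv.sum_comp (s i) (fun j => psProb s i j * w j),
      sum_fin_eq_range (fun r => psProb s i (s i r) * w (s i r))]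
    apply Finset.sum_congr rfl
    intro v hv
    rw [Finset.mem_range] at hv
    simp only [dif_pos hv]
    ring
  rw [hc1, hc2] at habel
  exact habel

end PropShare

section Doubling

variable {s s' : Fin n → (Fin n ≃ Fin n)} {i : Fin n}

/-- a unilateral deviation can at most halve the exhaustion time of any item. -/
lemma doubling_aux (hss : ∀ m, m ≠ i → s m = s' m) :
    ∀ k, ∀ j : Fin n, (stAt s' k).rem j = 0 → psTime s j ≤ 2 * psTime s' j := by
  intro k
  induction k with
  | zero =>
      intro j hj
      have : (stAt s' 0).rem j = 1 := rfl
      rw [this] at hj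
      norm_num at hj
  | succ k ih =>
      intro j hj
      by_cases h0 : (stAt s' k).rem j = 0
      · exact ih j h0
      have hjp : 0 < (stAt s' k).rem j :=
        lt_of_le_of_ne ((good_stAt (s := s') k).rem_nonneg j) (Ne.symm h0)
      have htb : psTime s' j = (stAt s' (k+1)).time := psTime_eq_succ_time hjp hj
      by_cases hhalf : (1:ℝ)/2 ≤ psTime s' j
      · have := psTime_le_one (s := s) j
        linarith
      push_neg at hhalf
      by_contra hcon
      push_neg at hcon
      -- notation
      have hn : 0 < n := j.pos
      -- each run-2 phase where someone eats j ends by time psTime s' j < 1/2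
      have hlk : ∀ l : ℕ, (stAt s' l).time < psTime s' j → l ≤ k := by
        intro l hl
        by_contra hc
        push_neg at hc
        have : (stAt s' (k+1)).time ≤ (stAt s' l).time := time_mono (s := s') hc
        linarith [htb ▸ hl]
      -- the overlap quantities
      set o : ℕ → ℕ → ℝ := fun l k1 => ov ((stAt s k1).time / 2) ((stAt s (k1+1)).time / 2)
        ((stAt s' l).time) ((stAt s' (l+1)).time) with ho
      have homono : ∀ k1, (stAt s k1).time / 2 ≤ (stAt s (k1+1)).time / 2 := by
        intro k1
        have := time_mono_succ (s := s) k1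
        linarith
      have ho'mono : ∀ l, (stAt s' l).time ≤ (stAt s' (l+1)).time :=
        fun l => time_mono_succ (s := s') l
      -- subclaim A : for phases where j is eaten in run 2, the phase length is the
      -- total overlap with the halved run-1 phases
      have hA : ∀ l : ℕ, (stAt s' l).time < psTime s' j →
          (stAt s' (l+1)).time - (stAt s' l).time = ∑ k1 ∈ Finset.range n, o l k1 := by
        intro l hl
        have hl1 : (stAt s' (l+1)).time ≤ psTime s' j := by
          rw [htb]
          exact time_mono (s := s') (Nat.succ_le_succ (hlk l hl))
        have htel := ov_telescope homono ((stAt s' l).time) ((stAt s' (l+1)).time)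
          (ho'mono l) n
        have hT0 : (stAt s 0).time = 0 := rfl
        have hTn : (stAt s n).time = 1 := time_final (s := s) hn
        rw [hT0, hTn] at htel
        have h1 : min ((stAt s' (l+1)).time) (max ((stAt s' l).time) ((1:ℝ)/2))
            = (stAt s' (l+1)).time := by
          rw [max_eq_right (by linarith [(good_stAt (s := s') l).time_nonneg] :
            (stAt s' l).time ≤ (1:ℝ)/2)]
          exact min_eq_left (by linarith)
        have h2 : min ((stAt s' (l+1)).time) (max ((stAt s' l).time) ((0:ℝ)/2))
            = (stAt s' l).time := by
          rw [show (0:ℝ)/2 = 0 from by norm_num,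
            max_eq_left ((good_stAt (s := s') l).time_nonneg)]
          exact min_eq_right (ho'mono l)
        rw [h1, h2] at htel
        rw [← htel]
      -- subclaim B : if a run-2 phase where j is eaten overlaps the halved run-1
      -- phase k1, then m also eats j in run 1 during phase k1
      have hB : ∀ (m : Fin n), m ≠ i → ∀ k1 l : ℕ, condEat s' l m j → 0 < o l k1 →
          condEat s k1 m j := by
        intro m hm k1 l hcondl hpos
        obtain ⟨hl1, hl2⟩ := hcondl
        have hov := ov_pos (by rw [ho] at hpos; exact hpos)
        have hb1 : (stAt s k1).time / 2 < (stAt s' (l+1)).time :=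
          lt_of_le_of_lt (le_max_left _ _) (lt_of_lt_of_le hov (min_le_right _ _))
        have hb2 : (stAt s' l).time < (stAt s (k1+1)).time / 2 :=
          lt_of_le_of_lt (le_max_right _ _) (lt_of_lt_of_le hov (min_le_left _ _))
        have hup : (stAt s' (l+1)).time ≤ psTime s' j := by
          rw [htb]
          exact time_mono (s := s') (Nat.succ_le_succ (hlk l hl1))
        constructor
        · -- j is alive in run 1 at the start of phase k1
          calc (stAt s k1).time < 2 * (stAt s' (l+1)).time := by linarith
            _ ≤ 2 * psTime s' j := by linarith
            _ < psTime s j := hcon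
        · intro r hr
          have hsm : s m = s' m := hss m hm
          have hr' : r < (s' m).symm j := by rw [← hsm]; exact hr
          have h3 := hl2 ((s' m).symm ((s m) r)) (by rw [hsm, Equiv.symm_apply_apply]; exact hr')
          rw [Equiv.apply_symm_apply] at h3
          -- h3 : psTime s' (s m r) ≤ (stAt s' l).time
          have hdead' : (stAt s' k).rem (s m r) = 0 := by
            rw [dead_iff]
            calc psTime s' (s m r) ≤ (stAt s' l).time := h3
              _ ≤ (stAt s' k).time := time_mono (s := s') (hlk l hl1)
          have hih := ih (s m r) hdead'
          -- psTime s (s m r) ≤ 2 * psTime s' (s m r) ≤ 2 * (stAt s' l).time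
          --   < (stAt s (k1+1)).time, and it is a breakpoint of run 1
          obtain ⟨k2, hk2n, he2⟩ := psTime_breakpoint (s := s) (s m r)
          have hlt2 : (stAt s k2).time < (stAt s (k1+1)).time := by
            rw [← he2]
            calc psTime s (s m r) ≤ 2 * psTime s' (s m r) := hih
              _ ≤ 2 * (stAt s' l).time := by linarith
              _ < (stAt s (k1+1)).time := by linarith
          have hk2k1 : k2 ≤ k1 := by
            by_contra hc
            push_neg at hc
            exact absurd (time_mono (s := s) (by omega : k1 + 1 ≤ k2)) (not_le.2 hlt2)
          rw [he2]
          exact time_mono (s := s) hk2k1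
      -- claim 1 : each non-deviator consumes at most half as much of j in run 2
      have hclaim1 : ∀ (m : Fin n), m ≠ i →
          (stAt s' n).cons m j ≤ (stAt s n).cons m j / 2 := by
        intro m hm
        rw [cons_eq_sum (s := s') n m j, cons_eq_sum (s := s) n m j]
        have e1 : ∀ l ∈ Finset.range n,
            (if condEat s' l m j then (stAt s' (l+1)).time - (stAt s' l).time else 0)
            = ∑ k1 ∈ Finset.range n, (if condEat s' l m j then o l k1 else 0) := by
          intro l _
          by_cases hc : condEat s' l m j
          · rw [if_pos hc, hA l hc.1]
            exact Finset.sum_congr rfl (fun k1 _ => by rw [if_pos hc])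
          · rw [if_neg hc]
            rw [Finset.sum_congr rfl (fun k1 _ => by rw [if_neg hc])]
            rw [Finset.sum_const, smul_zero]
        rw [Finset.sum_congr rfl e1, Finset.sum_comm]
        have e2 : ∀ k1 ∈ Finset.range n,
            (∑ l ∈ Finset.range n, if condEat s' l m j then o l k1 else 0)
            ≤ (if condEat s k1 m j then (stAt s (k1+1)).time - (stAt s k1).time else 0) / 2 := by
          intro k1 _
          by_cases hc1 : condEat s k1 m j
          · rw [if_pos hc1]
            have hle : (∑ l ∈ Finset.range n, if condEat s' l m j then o l k1 else 0)
                ≤ ∑ l ∈ Finset.range n, o l k1 := by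
              apply Finset.sum_le_sum
              intro l _
              by_cases hc : condEat s' l m j
              · rw [if_pos hc]
              · rw [if_neg hc]
                exact ov_nonneg _ _ _ _
            have htel := ov_telescope ho'mono ((stAt s k1).time / 2)
              ((stAt s (k1+1)).time / 2) (homono k1) n
            have hub : ∑ l ∈ Finset.range n, o l k1 ≤
                (stAt s (k1+1)).time / 2 - (stAt s k1).time / 2 := by
              rw [show (∑ l ∈ Finset.range n, o l k1) = ∑ l ∈ Finset.range n,
                ov ((stAt s' l).time) ((stAt s' (l+1)).time)
                  ((stAt s k1).time / 2) ((stAt s (k1+1)).time / 2) from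
                Finset.sum_congr rfl (fun l _ => by rw [ho]; exact ov_comm _ _ _ _)]
              rw [htel]
              have hT0 : (stAt s' 0).time = 0 := rfl
              rw [hT0]
              have g1 : min ((stAt s (k1+1)).time / 2)
                  (max ((stAt s k1).time / 2) ((stAt s' n).time))
                  ≤ (stAt s (k1+1)).time / 2 := min_le_left _ _
              have g2 : min ((stAt s (k1+1)).time / 2)
                  (max ((stAt s k1).time / 2) (0:ℝ)) = (stAt s k1).time / 2 := by
                rw [max_eq_left (by linarith [(good_stAt (s := s) k1).time_nonneg])]
                exact min_eq_right (homono k1)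
              rw [g2]
              linarith
            linarith
          · rw [if_neg hc1]
            rw [show (0:ℝ)/2 = 0 from by norm_num]
            have hz : ∀ l ∈ Finset.range n, (if condEat s' l m j then o l k1 else 0) = 0 := by
              intro l _
              by_cases hc : condEat s' l m j
              · rw [if_pos hc]
                rcases eq_or_lt_of_le (ov_nonneg ((stAt s k1).time / 2)
                  ((stAt s (k1+1)).time / 2) ((stAt s' l).time) ((stAt s' (l+1)).time))
                  with he | hlt
                · exact he.symm
                · exact absurd (hB m hm k1 l hc hlt) hc1
              · rw [if_neg hc]
            rw [Finset.sum_congr rfl hz, Finset.sum_const, smul_zero]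
        calc (∑ k1 ∈ Finset.range n, ∑ l ∈ Finset.range n,
              if condEat s' l m j then o l k1 else 0)
            ≤ ∑ k1 ∈ Finset.range n, (if condEat s k1 m j then
                (stAt s (k1+1)).time - (stAt s k1).time else 0) / 2 :=
              Finset.sum_le_sum e2
          _ = (∑ k1 ∈ Finset.range n, if condEat s k1 m j then
                (stAt s (k1+1)).time - (stAt s k1).time else 0) / 2 := by
              rw [Finset.sum_div]
      -- claim 2 : the deviator consumes at most psTime s' j of item j in run 2
      have hclaim2 : (stAt s' n).cons i j ≤ psTime s' j := by
        rw [cons_eq_sum (s := s') n i j]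
        calc (∑ l ∈ Finset.range n, if condEat s' l i j then
              (stAt s' (l+1)).time - (stAt s' l).time else 0)
            ≤ ∑ l ∈ Finset.range n, (if (stAt s' l).time < psTime s' j then
              (stAt s' (l+1)).time - (stAt s' l).time else 0) := by
              apply Finset.sum_le_sum
              intro l _
              by_cases hc : condEat s' l i j
              · rw [if_pos hc, if_pos hc.1]
              · rw [if_neg hc]
                by_cases hc2 : (stAt s' l).time < psTime s' j
                · rw [if_pos hc2]; exact delta_nonneg (s := s') l
                · rw [if_neg hc2]
          _ = psTime s' j := sum_delta_lt_psTime j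
      -- total consumption of j in each run
      have htot' : ∑ m, (stAt s' n).cons m j = 1 := by
        have := (good_stAt (s := s') n).sum_cons_col j
        rw [rem_final (s := s') j] at this
        simpa using this
      have htot : ∑ m, (stAt s n).cons m j ≤ 1 := by
        have := (good_stAt (s := s) n).sum_cons_col j
        rw [this]
        linarith [(good_stAt (s := s) n).rem_nonneg j]
      -- assemble the contradiction
      have hsplit' : ∑ m, (stAt s' n).cons m j =
          (stAt s' n).cons i j + ∑ m ∈ Finset.univ.erase i, (stAt s' n).cons m j :=
        (Finset.add_sum_erase _ _ (Finset.mem_univ i)).symm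
      have hsplit : ∑ m ∈ Finset.univ.erase i, (stAt s n).cons m j ≤ 1 := by
        have h1 : ∑ m ∈ Finset.univ.erase i, (stAt s n).cons m j ≤
            ∑ m, (stAt s n).cons m j := by
          apply Finset.sum_le_sum_of_subset_of_nonneg (Finset.erase_subset _ _)
          intro m _ _
          exact (good_stAt (s := s) n).cons_nonneg m j
        linarith
      have herase : ∑ m ∈ Finset.univ.erase i, (stAt s' n).cons m j ≤
          (∑ m ∈ Finset.univ.erase i, (stAt s n).cons m j) / 2 := by
        rw [Finset.sum_div]
        apply Finset.sum_le_sum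
        intro m hm
        exact hclaim1 m (Finset.ne_of_mem_erase hm)
      rw [hsplit'] at htot'
      have : (1:ℝ) < 1 := by
        calc (1:ℝ) = (stAt s' n).cons i j + ∑ m ∈ Finset.univ.erase i,
              (stAt s' n).cons m j := htot'.symm
          _ ≤ psTime s' j + 1/2 := by
              have := le_trans herase (by linarith : (∑ m ∈ Finset.univ.erase i,
                (stAt s n).cons m j) / 2 ≤ 1/2)
              linarith
          _ < 1 := by linarith
      exact absurd this (lt_irrefl 1)

/-- the doubling lemma: a unilateral deviation at most halves exhaustion times. -/
lemma doubling (hss : ∀ m, m ≠ i → s m = s' m) (j : Fin n) :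
    psTime s j ≤ 2 * psTime s' j :=
  doubling_aux hss n j (rem_final j)

end Doubling

end PS

open PS

/-- The coarse correlated Price of Anarchy of Probabilistic Serial is `O(√n)`:
there is a universal constant `C > 0` such that for every `n`, every profile `u`
of unit-sum valuations and every coarse correlated equilibrium `q` of
Probabilistic Serial at `u`, `SW_OPT(u) ≤ C · √n · E_{s∼q}[SW_PS(u, s)]`. -/
theorem ps_cce_poa_sqrt_n :
    ∃ C : ℝ, 0 < C ∧
      ∀ (n : ℕ) (u : Fin n → Fin n → ℝ) (q : (Fin n → (Fin n ≃ Fin n)) → ℝ),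
        (∀ i, UnitSum (u i)) → PSCCE u q →
        SWopt u ≤ C * Real.sqrt n * ∑ sp, q sp * psSW u sp := by
  classical
  refine ⟨3, by norm_num, ?_⟩
  intro n u q hu hq
  obtain ⟨hq0, hq1, hqE⟩ := hq
  -- the optimal matching
  obtain ⟨μ, _, hμ⟩ := Finset.exists_mem_eq_sup'
    (⟨Equiv.refl (Fin n), Finset.mem_univ _⟩ :
      (Finset.univ : Finset (Equiv.Perm (Fin n))).Nonempty)
    (fun μ : Equiv.Perm (Fin n) => ∑ i, u i (μ i))
  rw [SWopt, hμ]
  rcases Nat.eq_zero_or_pos n with rfl | hn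
  · simp [psSW]
  have hnr : (0:ℝ) < n := by exact_mod_cast hn
  have hsq : (0:ℝ) < Real.sqrt n := Real.sqrt_pos.2 hnr
  have hsqmul : Real.sqrt n * Real.sqrt n = n := Real.mul_self_sqrt hnr.le
  -- basic bounds on the valuations
  have hu0 : ∀ i j, 0 ≤ u i j := fun i j => (hu i).1 j
  have hu1 : ∀ i j, u i j ≤ 1 := by
    intro i j
    calc u i j ≤ ∑ j', u i j' :=
        Finset.single_le_sum (fun j' _ => hu0 i j') (Finset.mem_univ j)
      _ = 1 := (hu i).2
  -- expected welfare of agent i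
  set E : ℝ := ∑ sp, q sp * psSW u sp with hE
  set Ei : Fin n → ℝ := fun i => ∑ sp, q sp * ∑ j, psProb sp i j * u i j with hEi
  have hEsum : E = ∑ i, Ei i := by
    rw [hE]
    simp only [hEi]
    rw [Finset.sum_comm]
    apply Finset.sum_congr rfl
    intro sp _
    rw [psSW, Finset.mul_sum]
  -- step 1 : E ≥ 1 via the sorted deviation and sd-proportionality
  have hE1 : (1:ℝ) ≤ E := by
    have hEilow : ∀ i, 1/(n:ℝ) ≤ Ei i := by
      intro i
      set σ : Fin n ≃ Fin n := (Fin.revPerm).trans (Tuple.sort (u i)) with hσ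
      have hdev := hqE i σ
      have hlow : ∀ sp, 1/(n:ℝ) ≤ ∑ j, psProb (Function.update sp i σ) i j * u i j := by
        intro sp
        have := prop_share (s := Function.update sp i σ) i (u i) (hu0 i) ?_
        · rw [(hu i).2] at this
          exact this
        · intro r r' hrr'
          rw [Function.update_self, hσ]
          have hmono := Tuple.monotone_sort (u i)
          exact hmono (Fin.rev_le_rev.2 hrr')
      calc 1/(n:ℝ) = ∑ sp, q sp * (1/(n:ℝ)) := by
            rw [← Finset.sum_mul, hq1, one_mul]
        _ ≤ ∑ sp, q sp * ∑ j, psProb (Function.update sp i σ) i j * u i j := by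
            apply Finset.sum_le_sum
            intro sp _
            exact mul_le_mul_of_nonneg_left (hlow sp) (hq0 sp)
        _ ≤ Ei i := hdev
    calc (1:ℝ) = ∑ _i : Fin n, 1/(n:ℝ) := by
          rw [Finset.sum_const, Finset.card_univ, Fintype.card_fin, nsmul_eq_mul]
          field_simp
      _ ≤ ∑ i, Ei i := Finset.sum_le_sum (fun i _ => hEilow i)
      _ = E := hEsum.symm
  -- step 2 : the "report your optimal item first" deviation
  have hstep2 : ∀ i : Fin n, ∑ sp, q sp * (u i (μ i) * psTime sp (μ i)) ≤ 2 * Ei i := by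
    intro i
    set dev : Fin n ≃ Fin n := Equiv.swap ⟨0, hn⟩ (μ i) with hdv
    have hkey : ∀ sp : Fin n → (Fin n ≃ Fin n),
        u i (μ i) * psTime sp (μ i) ≤
          2 * ∑ j, psProb (Function.update sp i dev) i j * u i j := by
      intro sp
      have hss : ∀ m, m ≠ i → sp m = (Function.update sp i dev) m := by
        intro m hm
        rw [Function.update_of_ne hm]
      have hdbl : psTime sp (μ i) ≤ 2 * psTime (Function.update sp i dev) (μ i) :=
        doubling hss (μ i)
      have htop : (Function.update sp i dev) i ⟨0, hn⟩ = μ i := by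
        rw [Function.update_self, hdv, Equiv.swap_apply_left]
      have hprob : psProb (Function.update sp i dev) i (μ i) =
          psTime (Function.update sp i dev) (μ i) := psProb_top hn htop
      calc u i (μ i) * psTime sp (μ i)
          ≤ u i (μ i) * (2 * psTime (Function.update sp i dev) (μ i)) :=
            mul_le_mul_of_nonneg_left hdbl (hu0 i (μ i))
        _ = 2 * (psProb (Function.update sp i dev) i (μ i) * u i (μ i)) := by
            rw [hprob]; ring
        _ ≤ 2 * ∑ j, psProb (Function.update sp i dev) i j * u i j := by
            apply mul_le_mul_of_nonneg_left _ (by norm_num : (0:ℝ) ≤ 2)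
            exact Finset.single_le_sum
              (fun j _ => mul_nonneg (psProb_nonneg i j) (hu0 i j)) (Finset.mem_univ (μ i))
    calc ∑ sp, q sp * (u i (μ i) * psTime sp (μ i))
        ≤ ∑ sp, q sp * (2 * ∑ j, psProb (Function.update sp i dev) i j * u i j) := by
          apply Finset.sum_le_sum
          intro sp _
          exact mul_le_mul_of_nonneg_left (hkey sp) (hq0 sp)
      _ = 2 * ∑ sp, q sp * ∑ j, psProb (Function.update sp i dev) i j * u i j := by
          rw [Finset.mul_sum]
          exact Finset.sum_congr rfl (fun sp _ => by ring)
      _ ≤ 2 * Ei i := by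
          have := hqE i dev
          linarith
  -- step 3 : pointwise bound
  have hstep3 : ∀ sp : Fin n → (Fin n ≃ Fin n),
      ∑ i, u i (μ i) ≤ Real.sqrt n * ∑ i, u i (μ i) * psTime sp (μ i) + Real.sqrt n := by
    intro sp
    have hpt : ∀ i : Fin n, u i (μ i) ≤ Real.sqrt n * (u i (μ i) * psTime sp (μ i)) +
        (if psTime sp (μ i) < 1/Real.sqrt n then (1:ℝ) else 0) := by
      intro i
      by_cases hc : psTime sp (μ i) < 1/Real.sqrt n
      · rw [if_pos hc]
        have h1 : 0 ≤ Real.sqrt n * (u i (μ i) * psTime sp (μ i)) :=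
          mul_nonneg hsq.le (mul_nonneg (hu0 _ _) (psTime_pos (s := sp) (μ i)).le)
        linarith [hu1 i (μ i)]
      · rw [if_neg hc]
        push_neg at hc
        have h2 : 1 ≤ Real.sqrt n * psTime sp (μ i) := by
          have h4 := mul_le_mul_of_nonneg_left hc hsq.le
          rw [mul_one_div, div_self (ne_of_gt hsq)] at h4
          exact h4
        nlinarith [hu0 i (μ i), hsq.le]
    have hcount : (∑ i : Fin n, if psTime sp (μ i) < 1/Real.sqrt n then (1:ℝ) else 0)
        ≤ Real.sqrt n := by
      rw [Finset.sum_boole]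
      have hsub : (Finset.univ.filter (fun i : Fin n => psTime sp (μ i) < 1/Real.sqrt n)).card
          ≤ (Finset.univ.filter (fun j : Fin n => psTime sp j ≤ 1/Real.sqrt n)).card := by
        apply Finset.card_le_card_of_injOn (fun i => μ i)
        · intro i hi
          rw [Finset.mem_coe, Finset.mem_filter] at hi ⊢
          exact ⟨Finset.mem_univ _, hi.2.le⟩
        · intro a _ b _ hab
          exact μ.injective hab
      calc ((Finset.univ.filter
            (fun i : Fin n => psTime sp (μ i) < 1/Real.sqrt n)).card : ℝ)
          ≤ ((Finset.univ.filter (fun j : Fin n => psTime sp j ≤ 1/Real.sqrt n)).card : ℝ) :=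
            Nat.cast_le.2 hsub
        _ ≤ n * (1/Real.sqrt n) := count_exhausted _ (by positivity)
        _ = Real.sqrt n := by
            rw [← hsqmul]
            field_simp
            rw [Real.sqrt_sq hsq.le]
    calc ∑ i, u i (μ i)
        ≤ ∑ i, (Real.sqrt n * (u i (μ i) * psTime sp (μ i)) +
            (if psTime sp (μ i) < 1/Real.sqrt n then (1:ℝ) else 0)) :=
          Finset.sum_le_sum (fun i _ => hpt i)
      _ = Real.sqrt n * ∑ i, u i (μ i) * psTime sp (μ i) +
            ∑ i : Fin n, (if psTime sp (μ i) < 1/Real.sqrt n then (1:ℝ) else 0) := by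
          rw [Finset.sum_add_distrib, Finset.mul_sum]
      _ ≤ Real.sqrt n * ∑ i, u i (μ i) * psTime sp (μ i) + Real.sqrt n := by
          linarith [hcount]
  -- final assembly
  have hfinal : ∑ i, u i (μ i) ≤ 2 * Real.sqrt n * E + Real.sqrt n := by
    calc ∑ i, u i (μ i) = ∑ sp, q sp * ∑ i, u i (μ i) := by
          rw [← Finset.sum_mul, hq1, one_mul]
      _ ≤ ∑ sp, q sp * (Real.sqrt n * ∑ i, u i (μ i) * psTime sp (μ i) + Real.sqrt n) := by
          apply Finset.sum_le_sum
          intro sp _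
          exact mul_le_mul_of_nonneg_left (hstep3 sp) (hq0 sp)
      _ = Real.sqrt n * ∑ sp, q sp * ∑ i, u i (μ i) * psTime sp (μ i) +
            Real.sqrt n * ∑ sp, q sp := by
          rw [Finset.mul_sum, Finset.mul_sum, ← Finset.sum_add_distrib]
          exact Finset.sum_congr rfl (fun sp _ => by ring)
      _ = Real.sqrt n * ∑ i, ∑ sp, q sp * (u i (μ i) * psTime sp (μ i)) + Real.sqrt n := by
          rw [hq1, mul_one]
          have hAB : ∑ sp, q sp * ∑ i, u i (μ i) * psTime sp (μ i)
              = ∑ i, ∑ sp, q sp * (u i (μ i) * psTime sp (μ i)) := by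
            rw [Finset.sum_comm]
            apply Finset.sum_congr rfl
            intro sp _
            rw [Finset.mul_sum]
          rw [hAB]
      _ ≤ Real.sqrt n * ∑ i, 2 * Ei i + Real.sqrt n := by
          have := Finset.sum_le_sum (fun i (_ : i ∈ Finset.univ) => hstep2 i)
          have h3 : (0:ℝ) ≤ Real.sqrt n := hsq.le
          nlinarith [this]
      _ = 2 * Real.sqrt n * (∑ i, Ei i) + Real.sqrt n := by
          rw [← Finset.mul_sum]
          ring
      _ = 2 * Real.sqrt n * E + Real.sqrt n := by rw [hEsum]
  calc ∑ i, u i (μ i) ≤ 2 * Real.sqrt n * E + Real.sqrt n := hfinal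
    _ ≤ 2 * Real.sqrt n * E + Real.sqrt n * E := by nlinarith [hsq.le]
    _ = 3 * Real.sqrt n * E := by ring
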